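/- For each i ≥ 1 and 1 ≤ j ≤ 2^i - 1, the transformation T maps the dyadic interval I_j^i onto I_{j-1}^i as a translation, where I_j^i is the set of r whose first i binary digits, read as the reversed binary expansion of an integer, equal j. Moreover T maps I_0^i \ {0} into I_{2^i-1}^i. -/

import Mathlib

noncomputable def binDigit (i : ℕ) (r : ℝ) : ℤ := ⌊r * 2 ^ i⌋ % 2

noncomputable def binTau (r : ℝ) : ℕ := sInf {i | 0 < i ∧ binDigit i r = 1}

/-- The binary odometer `T r = r - 2^{-τ(r)} + ∑_{l=1}^{τ(r)-1} 2^{-l}`. -/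
noncomputable def TOdo (r : ℝ) : ℝ :=
  r - (2 : ℝ)⁻¹ ^ binTau r + ∑ l ∈ Finset.Icc 1 (binTau r - 1), (2 : ℝ)⁻¹ ^ l

/-- The dyadic interval `I_j^i`: the set of `r ∈ [0,1)` whose first `i` binary
digits `r_1, …, r_i` are the bits `j_1, …, j_i` of `j = ∑_{l=1}^i 2^{l-1} j_l`
(reversed-bits labeling). -/
def dyadicI (i j : ℕ) : Set ℝ :=
  {r | r ∈ Set.Ico (0 : ℝ) 1 ∧
    ∀ l, 1 ≤ l → l ≤ i → binDigit l r = if Nat.testBit j (l - 1) then 1 else 0}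

namespace Stmt10Aux

/-- Reverse of the low `i` bits of `j`. -/
def bitRev : ℕ → ℕ → ℕ
  | 0, _ => 0
  | i + 1, j => bitRev i (j / 2) + j % 2 * 2 ^ i

lemma bitRev_lt (i j : ℕ) : bitRev i j < 2 ^ i := by
  induction i generalizing j with
  | zero => simp [bitRev]
  | succ i ih =>
    have h1 := ih (j / 2)
    have h2 : j % 2 ≤ 1 := by omega
    have h3 : j % 2 * 2 ^ i ≤ 2 ^ i := by
      calc j % 2 * 2 ^ i ≤ 1 * 2 ^ i := Nat.mul_le_mul_right _ h2
      _ = 2 ^ i := one_mul _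
    show bitRev i (j / 2) + j % 2 * 2 ^ i < 2 ^ (i + 1)
    rw [pow_succ]
    omega

lemma bitRev_testBit (i j k : ℕ) (hk : k < i) :
    (bitRev i j).testBit k = j.testBit (i - 1 - k) := by
  induction i generalizing j k with
  | zero => omega
  | succ i ih =>
    show (bitRev i (j / 2) + j % 2 * 2 ^ i).testBit k = _
    rw [show bitRev i (j / 2) + j % 2 * 2 ^ i = 2 ^ i * (j % 2) + bitRev i (j / 2) by ring]
    rw [Nat.testBit_two_pow_mul_add _ (bitRev_lt i (j / 2)) k]
    by_cases hki : k < i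
    · rw [if_pos hki, ih (j / 2) k hki, Nat.testBit_div_two]
      congr 1
      omega
    · have hk' : k = i := by omega
      subst hk'
      rw [if_neg (lt_irrefl k)]
      rw [show k + 1 - 1 - k = 0 from by omega, show k - k = 0 from by omega]
      rcases Nat.mod_two_eq_zero_or_one j with h | h <;>
        simp [Nat.testBit_eq_decide_div_mod_eq, h]

lemma bitRev_testBit_ge (i j k : ℕ) (hk : i ≤ k) : (bitRev i j).testBit k = false :=
  Nat.testBit_lt_two_pow (lt_of_lt_of_le (bitRev_lt i j)
    (Nat.pow_le_pow_right (by norm_num) hk))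

lemma bitRev_zero (i : ℕ) : bitRev i 0 = 0 := by
  induction i with
  | zero => rfl
  | succ i ih => show bitRev i (0 / 2) + 0 % 2 * 2 ^ i = 0; simp [ih]

lemma bitRev_sumR (i j : ℕ) :
    (bitRev i j : ℝ) = ∑ m ∈ Finset.range i, if j.testBit m then (2 : ℝ) ^ (i - 1 - m) else 0 := by
  induction i generalizing j with
  | zero => simp [bitRev]
  | succ i ih =>
    rw [show bitRev (i + 1) j = bitRev i (j / 2) + j % 2 * 2 ^ i from rfl]
    rw [Finset.sum_range_succ']
    push_cast
    rw [ih (j / 2)]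
    congr 1
    · apply Finset.sum_congr rfl
      intro m _
      rw [Nat.testBit_div_two, show i - (m + 1) = i - 1 - m from by omega]
    · rcases Nat.mod_two_eq_zero_or_one j with h | h <;>
        simp [Nat.testBit_eq_decide_div_mod_eq, h]

lemma floor_div_pow (x : ℝ) (k : ℕ) : ⌊x / 2 ^ k⌋ = ⌊x⌋ / 2 ^ k := by
  have hk : (0 : ℤ) < 2 ^ k := by positivity
  have hkR : (0 : ℝ) < 2 ^ k := by positivity
  have hmod := Int.mul_ediv_add_emod ⌊x⌋ (2 ^ k)
  have h0 : (0 : ℤ) ≤ ⌊x⌋ % 2 ^ k := Int.emod_nonneg _ (by positivity)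
  have h1 : ⌊x⌋ % 2 ^ k < 2 ^ k := Int.emod_lt_of_pos _ hk
  have hfl : (⌊x⌋ : ℝ) ≤ x := Int.floor_le x
  have hfu : x < ⌊x⌋ + 1 := Int.lt_floor_add_one x
  rw [Int.floor_eq_iff]
  have key : ((2 ^ k * (⌊x⌋ / 2 ^ k) + ⌊x⌋ % 2 ^ k : ℤ) : ℝ) = (⌊x⌋ : ℝ) := by
    exact_mod_cast congrArg (fun z : ℤ => (z : ℝ)) hmod
  push_cast at key
  have h0R : (0 : ℝ) ≤ ((⌊x⌋ % 2 ^ k : ℤ) : ℝ) := by exact_mod_cast h0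
  have h1R : ((⌊x⌋ % 2 ^ k : ℤ) : ℝ) < 2 ^ k := by exact_mod_cast h1
  have h1' : (⌊x⌋ % 2 ^ k) + 1 ≤ 2 ^ k := h1
  have h1R' : ((⌊x⌋ % 2 ^ k : ℤ) : ℝ) + 1 ≤ 2 ^ k := by exact_mod_cast h1'
  constructor
  · rw [le_div_iff₀ hkR]
    push_cast
    nlinarith
  · rw [div_lt_iff₀ hkR]
    push_cast
    nlinarith

lemma binDigit_eq (r : ℝ) {l i : ℕ} (h2 : l ≤ i) :
    binDigit l r = ⌊r * 2 ^ i⌋ / 2 ^ (i - l) % 2 := by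
  have hpow : (2 : ℝ) ^ l * 2 ^ (i - l) = 2 ^ i := by
    rw [← pow_add]; congr 1; omega
  have hx : r * 2 ^ l = r * 2 ^ i / 2 ^ (i - l) := by
    rw [eq_div_iff (by positivity : ((2 : ℝ) ^ (i - l)) ≠ 0), mul_assoc, hpow]
  unfold binDigit
  rw [hx, floor_div_pow]

lemma binDigit_testBit {r : ℝ} (hr0 : 0 ≤ r) {l i : ℕ} (h2 : l ≤ i) :
    binDigit l r = if (⌊r * 2 ^ i⌋.toNat).testBit (i - l) then 1 else 0 := by
  set N := ⌊r * 2 ^ i⌋.toNat with hNdef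
  have hnn : (0 : ℤ) ≤ ⌊r * 2 ^ i⌋ := Int.floor_nonneg.2 (by positivity)
  have hN : ⌊r * 2 ^ i⌋ = (N : ℤ) := (Int.toNat_of_nonneg hnn).symm
  rw [binDigit_eq r h2, hN]
  have hcast : ((N : ℤ) / 2 ^ (i - l)) % 2 = ((N / 2 ^ (i - l) % 2 : ℕ) : ℤ) := by
    push_cast; ring
  rw [hcast]
  rcases Nat.mod_two_eq_zero_or_one (N / 2 ^ (i - l)) with h | h <;>
    rw [Nat.testBit_eq_decide_div_mod_eq] <;> simp [h]

lemma mem_dyadicI (i j : ℕ) (r : ℝ) :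
    r ∈ dyadicI i j ↔ 0 ≤ r ∧ r < 1 ∧ ⌊r * 2 ^ i⌋ = (bitRev i j : ℤ) := by
  constructor
  · rintro ⟨⟨hr0, hr1⟩, hd⟩
    refine ⟨hr0, hr1, ?_⟩
    have hnn : (0 : ℤ) ≤ ⌊r * 2 ^ i⌋ := Int.floor_nonneg.2 (by positivity)
    have hlt : ⌊r * 2 ^ i⌋ < (2 : ℤ) ^ i := by
      rw [Int.floor_lt]
      push_cast
      nlinarith [pow_pos (show (0:ℝ) < 2 by norm_num) i]
    set N := ⌊r * 2 ^ i⌋.toNat with hNdef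
    have hN : ⌊r * 2 ^ i⌋ = (N : ℤ) := (Int.toNat_of_nonneg hnn).symm
    have hNlt : N < 2 ^ i := by
      rw [hN] at hlt; exact_mod_cast hlt
    suffices hNB : N = bitRev i j by rw [hN, hNB]
    apply Nat.eq_of_testBit_eq
    intro k
    by_cases hk : k < i
    · have h2 : i - k ≤ i := by omega
      have hdig := hd (i - k) (by omega) h2
      rw [binDigit_testBit hr0 h2] at hdig
      rw [show i - (i - k) = k from by omega] at hdig
      have hb : N.testBit k = j.testBit (i - k - 1) := by
        by_cases hNb : N.testBit k
        · by_cases hjb : j.testBit (i - k - 1)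
          · rw [hNb, hjb]
          · rw [if_pos hNb, if_neg hjb] at hdig; norm_num at hdig
        · by_cases hjb : j.testBit (i - k - 1)
          · rw [if_neg hNb, if_pos hjb] at hdig; norm_num at hdig
          · simp [hNb, hjb]
      rw [hb, bitRev_testBit i j k hk]
      congr 1
      omega
    · push_neg at hk
      rw [Nat.testBit_lt_two_pow (lt_of_lt_of_le hNlt (Nat.pow_le_pow_right (by norm_num) hk)),
        bitRev_testBit_ge i j k hk]
  · rintro ⟨hr0, hr1, hfl⟩
    refine ⟨⟨hr0, hr1⟩, ?_⟩
    intro l h1 h2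
    rw [binDigit_testBit hr0 h2, hfl, Int.toNat_natCast,
      bitRev_testBit i j (i - l) (by omega), show i - 1 - (i - l) = l - 1 from by omega]

lemma dyadicI_eq_Ico (i j : ℕ) :
    dyadicI i j = Set.Ico ((bitRev i j : ℝ) / 2 ^ i) (((bitRev i j : ℝ) + 1) / 2 ^ i) := by
  have hpos : (0 : ℝ) < 2 ^ i := by positivity
  ext r
  rw [mem_dyadicI i j, Set.mem_Ico]
  constructor
  · rintro ⟨hr0, hr1, hfl⟩
    rw [Int.floor_eq_iff] at hfl
    obtain ⟨ha, hb⟩ := hfl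
    push_cast at ha hb
    constructor
    · rw [div_le_iff₀ hpos]; linarith
    · rw [lt_div_iff₀ hpos]; linarith
  · rintro ⟨ha, hb⟩
    have hb0 : (0 : ℝ) ≤ (bitRev i j : ℝ) / 2 ^ i := by positivity
    have h1lt : (bitRev i j : ℝ) + 1 ≤ 2 ^ i := by
      exact_mod_cast Nat.succ_le_of_lt (bitRev_lt i j)
    have hr0 : 0 ≤ r := le_trans hb0 ha
    have hr1 : r < 1 := lt_of_lt_of_le hb (by rw [div_le_one hpos]; exact h1lt)
    refine ⟨hr0, hr1, ?_⟩
    rw [Int.floor_eq_iff]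
    have ha' := (div_le_iff₀ hpos).1 ha
    have hb' := (lt_div_iff₀ hpos).1 hb
    constructor
    · push_cast; linarith
    · push_cast; linarith

lemma binTau_eq {r : ℝ} {i j t : ℕ} (ht1 : 1 ≤ t) (hti : t ≤ i)
    (hbit : j.testBit (t - 1) = true)
    (hmin : ∀ l, 1 ≤ l → l < t → j.testBit (l - 1) = false)
    (hr : r ∈ dyadicI i j) : binTau r = t := by
  obtain ⟨⟨hr0, hr1⟩, hd⟩ := hr
  have hmem : t ∈ {n | 0 < n ∧ binDigit n r = 1} := by
    refine ⟨ht1, ?_⟩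
    rw [hd t ht1 hti, hbit]
    simp
  refine le_antisymm (Nat.sInf_le hmem) ?_
  by_contra h
  push_neg at h
  have hs : binTau r ∈ {n | 0 < n ∧ binDigit n r = 1} := Nat.sInf_mem ⟨t, hmem⟩
  obtain ⟨hs0, hs1⟩ := hs
  have := hd (binTau r) hs0 (by omega)
  rw [hmin (binTau r) hs0 h, if_neg Bool.false_ne_true] at this
  rw [this] at hs1
  norm_num at hs1

lemma sum_inv_two (n : ℕ) : ∑ l ∈ Finset.Icc 1 n, (2 : ℝ)⁻¹ ^ l = 1 - (2 : ℝ)⁻¹ ^ n := by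
  induction n with
  | zero => simp
  | succ n ih =>
    rw [Finset.sum_Icc_succ_top (by omega), ih, pow_succ]
    ring

lemma sum_Icc_one_range (k : ℕ) (f : ℕ → ℝ) :
    ∑ l ∈ Finset.Icc 1 k, f l = ∑ m ∈ Finset.range k, f (m + 1) := by
  induction k with
  | zero => simp
  | succ k ih =>
    rw [Finset.sum_Icc_succ_top (by omega), ih, Finset.sum_range_succ]

end Stmt10Aux

open Stmt10Aux in
/-- For `i ≥ 1` and `1 ≤ j ≤ 2^i - 1`, `T` maps `I_j^i` onto `I_{j-1}^i` as a
translation; moreover `T` maps `I_0^i \ {0}` into `I_{2^i-1}^i`. -/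
theorem stmt_10 (i j : ℕ) (hi : 1 ≤ i) (hj1 : 1 ≤ j) (hj2 : j ≤ 2 ^ i - 1) :
    (∃ c : ℝ, (∀ r ∈ dyadicI i j, TOdo r = r + c) ∧
      TOdo '' dyadicI i j = dyadicI i (j - 1)) ∧
    TOdo '' (dyadicI i 0 \ {0}) ⊆ dyadicI i (2 ^ i - 1) := by
  have h2i : (1 : ℕ) ≤ 2 ^ i := Nat.one_le_two_pow
  have hjlt : j < 2 ^ i := by omega
  have hpos : (0 : ℝ) < 2 ^ i := by positivity
  constructor
  · -- first part
    have hex : ∃ k, j.testBit k = true := by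
      by_contra h
      push_neg at h
      have : j = 0 := Nat.eq_of_testBit_eq fun k => by
        simp [Bool.eq_false_iff.2 (h k), Nat.zero_testBit]
      omega
    set k := Nat.find hex with hkdef
    have hk : j.testBit k = true := Nat.find_spec hex
    have hmin : ∀ m, m < k → j.testBit m = false := fun m hm =>
      Bool.eq_false_iff.2 (Nat.find_min hex hm)
    have hki : k < i := by
      have h1 : 2 ^ k ≤ j := Nat.ge_two_pow_of_testBit hk
      by_contra hc
      push_neg at hc
      have : 2 ^ i ≤ 2 ^ k := Nat.pow_le_pow_right (by norm_num) hc
      omega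
    -- bits of j - 1
    have hjmod : j % 2 ^ (k + 1) = 2 ^ k := by
      apply Nat.eq_of_testBit_eq
      intro m
      rw [Nat.testBit_mod_two_pow, Nat.testBit_two_pow]
      rcases lt_trichotomy m k with h | h | h
      · simp [hmin m h, show k ≠ m from by omega]
      · subst h; simp [hk]
      · simp [show ¬ m < k + 1 from by omega, show k ≠ m from by omega]
    set u := j / 2 ^ (k + 1) with hudef
    have hjdecomp : j = 2 ^ (k + 1) * u + 2 ^ k := by
      conv_lhs => rw [← Nat.div_add_mod j (2 ^ (k + 1))]
      rw [hjmod]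
    have h2k1 : (1 : ℕ) ≤ 2 ^ k := Nat.one_le_two_pow
    have hps : (2 : ℕ) ^ (k + 1) = 2 * 2 ^ k := by rw [pow_succ]; ring
    have hj1decomp : j - 1 = 2 ^ (k + 1) * u + (2 ^ k - 1) := by omega
    have hsub_lt : (2 : ℕ) ^ k - 1 < 2 ^ (k + 1) := by omega
    have hk_lt : (2 : ℕ) ^ k < 2 ^ (k + 1) := by omega
    have hb1 : ∀ m, m < k → (j - 1).testBit m = true := by
      intro m hm
      rw [hj1decomp, Nat.testBit_two_pow_mul_add _ hsub_lt, if_pos (by omega),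
        Nat.testBit_two_pow_sub_one]
      simp [hm]
    have hb2 : (j - 1).testBit k = false := by
      rw [hj1decomp, Nat.testBit_two_pow_mul_add _ hsub_lt, if_pos (by omega),
        Nat.testBit_two_pow_sub_one]
      simp
    have hb3 : ∀ m, k < m → (j - 1).testBit m = j.testBit m := by
      intro m hm
      rw [hj1decomp, Nat.testBit_two_pow_mul_add _ hsub_lt, if_neg (by omega)]
      conv_rhs => rw [hjdecomp]
      rw [Nat.testBit_two_pow_mul_add _ hk_lt, if_neg (by omega)]
    -- the translation constant
    set c : ℝ := (∑ l ∈ Finset.Icc 1 k, (2 : ℝ)⁻¹ ^ l) - (2 : ℝ)⁻¹ ^ (k + 1) with hcdef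
    have htrans : ∀ r ∈ dyadicI i j, TOdo r = r + c := by
      intro r hr
      have ht := binTau_eq (t := k + 1) (by omega) (by omega)
        (by simpa using hk) (fun l h1 h2 => hmin (l - 1) (by omega)) hr
      unfold TOdo
      rw [ht]
      simp only [Nat.add_sub_cancel, hcdef]
      ring
    -- bitRev relation
    have hpowinv : ∀ l : ℕ, l ≤ i → (2 : ℝ)⁻¹ ^ l * 2 ^ i = 2 ^ (i - l) := by
      intro l hl
      rw [show (2 : ℝ) ^ i = 2 ^ l * 2 ^ (i - l) from by rw [← pow_add]; congr 1; omega,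
        inv_pow, inv_mul_cancel_left₀ (by positivity)]
    have hrev : (bitRev i (j - 1) : ℝ) = (bitRev i j : ℝ) + c * 2 ^ i := by
      rw [bitRev_sumR, bitRev_sumR]
      have hsplit : ∀ m ∈ Finset.range i,
          (if (j - 1).testBit m then (2 : ℝ) ^ (i - 1 - m) else 0) =
            ((if j.testBit m then (2 : ℝ) ^ (i - 1 - m) else 0) +
            (if m < k then (2 : ℝ) ^ (i - 1 - m) else 0)) -
            (if m = k then (2 : ℝ) ^ (i - 1 - k) else 0) := by
        intro m _
        rcases lt_trichotomy m k with h | h | h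
        · rw [if_pos (hb1 m h), if_neg (by rw [hmin m h]; exact Bool.false_ne_true),
            if_pos h, if_neg (show ¬ m = k from by omega)]
          ring
        · subst h
          rw [if_neg (by rw [hb2]; exact Bool.false_ne_true), if_pos hk,
            if_neg (lt_irrefl k), if_pos rfl]
          ring
        · rw [hb3 m h, if_neg (show ¬ m < k from by omega),
            if_neg (show ¬ m = k from by omega)]
          ring
      rw [Finset.sum_congr rfl hsplit, Finset.sum_sub_distrib, Finset.sum_add_distrib]
      have hsum2 : ∑ m ∈ Finset.range i, (if m = k then (2 : ℝ) ^ (i - 1 - k) else 0) =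
          (2 : ℝ) ^ (i - 1 - k) := by
        rw [Finset.sum_ite_eq' (Finset.range i) k (fun _ => (2 : ℝ) ^ (i - 1 - k)),
          if_pos (Finset.mem_range.2 hki)]
      have hsum1 : ∑ m ∈ Finset.range i, (if m < k then (2 : ℝ) ^ (i - 1 - m) else 0) =
          ∑ m ∈ Finset.range k, (2 : ℝ) ^ (i - 1 - m) := by
        rw [← Finset.sum_subset (Finset.range_subset_range.2 hki.le)
          (fun x _ hx => if_neg (by simpa using hx))]
        exact Finset.sum_congr rfl fun m hm => if_pos (Finset.mem_range.1 hm)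
      have hc2 : c * 2 ^ i = (∑ m ∈ Finset.range k, (2 : ℝ) ^ (i - 1 - m)) -
          (2 : ℝ) ^ (i - 1 - k) := by
        rw [hcdef, sub_mul, Finset.sum_mul]
        congr 1
        · rw [sum_Icc_one_range k (fun l => (2 : ℝ)⁻¹ ^ l * 2 ^ i)]
          apply Finset.sum_congr rfl
          intro m hm
          rw [hpowinv (m + 1) (by have := Finset.mem_range.1 hm; omega),
            show i - (m + 1) = i - 1 - m from by omega]
        · rw [hpowinv (k + 1) (by omega), show i - (k + 1) = i - 1 - k from by omega]
      rw [hsum1, hsum2, hc2]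
      ring
    refine ⟨c, htrans, ?_⟩
    rw [Set.image_congr htrans, dyadicI_eq_Ico i j, dyadicI_eq_Ico i (j - 1),
      Set.image_add_const_Ico]
    have e1 : (bitRev i j : ℝ) / 2 ^ i + c = (bitRev i (j - 1) : ℝ) / 2 ^ i := by
      rw [hrev]; field_simp
    have e2 : ((bitRev i j : ℝ) + 1) / 2 ^ i + c = ((bitRev i (j - 1) : ℝ) + 1) / 2 ^ i := by
      rw [hrev]; field_simp; ring
    rw [e1, e2]
  · -- second part
    intro s hs
    obtain ⟨r, ⟨hrmem, hrne⟩, rfl⟩ := hs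
    have hrIco : r ∈ Set.Ico ((bitRev i 0 : ℝ) / 2 ^ i) (((bitRev i 0 : ℝ) + 1) / 2 ^ i) := by
      rw [← dyadicI_eq_Ico]; exact hrmem
    rw [bitRev_zero] at hrIco
    obtain ⟨ha, hb⟩ := hrIco
    simp only [Nat.cast_zero, zero_div, zero_add] at ha hb
    have hrpos : 0 < r := lt_of_le_of_ne ha (fun h => hrne (by simp [← h]))
    have h1le : (1 : ℝ) ≤ 2 ^ i := by exact_mod_cast h2i
    have hr1 : r < 1 := lt_of_lt_of_le hb (by rw [div_le_one hpos]; exact h1le)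
    have hdig0 : ∀ l, 1 ≤ l → l ≤ i → binDigit l r = 0 := by
      intro l h1 h2
      have := hrmem.2 l h1 h2
      rwa [Nat.zero_testBit, if_neg Bool.false_ne_true] at this
    have hzero_chain : ∀ L, (∀ l, 1 ≤ l → l ≤ L → binDigit l r = 0) → ⌊r * 2 ^ L⌋ = 0 := by
      intro L
      induction L with
      | zero =>
        intro _
        rw [pow_zero, mul_one, Int.floor_eq_zero_iff]
        exact ⟨le_of_lt hrpos, hr1⟩
      | succ L ihL =>
        intro h
        have hprev : ⌊r * 2 ^ L⌋ = 0 := ihL fun l h1 h2 => h l h1 (by omega)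
        rw [Int.floor_eq_zero_iff] at hprev
        obtain ⟨hp0, hp1⟩ := hprev
        have hlt2 : r * 2 ^ (L + 1) < 2 := by
          rw [pow_succ]
          nlinarith
        have hge0 : (0 : ℝ) ≤ r * 2 ^ (L + 1) := by positivity
        have hfl0 : (0 : ℤ) ≤ ⌊r * 2 ^ (L + 1)⌋ := Int.floor_nonneg.2 hge0
        have hfl2 : ⌊r * 2 ^ (L + 1)⌋ < 2 := by
          rw [Int.floor_lt]; exact_mod_cast hlt2
        have hd := h (L + 1) (by omega) (le_refl _)
        unfold binDigit at hd
        omega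
    have hSne : Set.Nonempty {n | 0 < n ∧ binDigit n r = 1} := by
      by_contra h
      rw [Set.not_nonempty_iff_eq_empty] at h
      have hall : ∀ l, 1 ≤ l → binDigit l r = 0 := by
        intro l h1
        have hnm : l ∉ ({n | 0 < n ∧ binDigit n r = 1} : Set ℕ) := by
          rw [h]; exact Set.notMem_empty l
        have h2 := Int.emod_two_eq ⌊r * 2 ^ l⌋
        unfold binDigit at hnm ⊢
        rcases h2 with h2 | h2
        · exact h2
        · exact absurd ⟨h1, h2⟩ hnm
      obtain ⟨n, hn⟩ := pow_unbounded_of_one_lt (r⁻¹) (show (1 : ℝ) < 2 by norm_num)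
      have hfln : ⌊r * 2 ^ n⌋ = 0 := hzero_chain n fun l h1 _ => hall l h1
      rw [Int.floor_eq_zero_iff] at hfln
      obtain ⟨_, hlt1⟩ := hfln
      have h2' : r * r⁻¹ < r * 2 ^ n := mul_lt_mul_of_pos_left hn hrpos
      rw [mul_inv_cancel₀ (ne_of_gt hrpos)] at h2'
      linarith
    set t := binTau r with htdef
    have htmem : t ∈ {n | 0 < n ∧ binDigit n r = 1} := Nat.sInf_mem hSne
    obtain ⟨ht0, ht1⟩ := htmem
    have htmin : ∀ l, 0 < l → l < t → binDigit l r = 0 := by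
      intro l hl0 hlt
      by_contra hc
      have h2 := Int.emod_two_eq ⌊r * 2 ^ l⌋
      have hd1 : binDigit l r = 1 := by unfold binDigit at hc ⊢; omega
      have hle : t ≤ l := Nat.sInf_le ⟨hl0, hd1⟩
      omega
    have hti : i < t := by
      by_contra hc
      push_neg at hc
      rw [hdig0 t ht0 hc] at ht1
      norm_num at ht1
    have hflr : ⌊r * 2 ^ (t - 1)⌋ = 0 := hzero_chain (t - 1) fun l h1 h2 =>
      htmin l h1 (by omega)
    rw [Int.floor_eq_zero_iff] at hflr
    obtain ⟨_, hrlt⟩ := hflr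
    have hps : (2 : ℝ) ^ t = 2 ^ (t - 1) * 2 := by
      rw [← pow_succ]; congr 1; omega
    have hflt : ⌊r * 2 ^ t⌋ = 1 := by
      have hlt2 : r * 2 ^ t < 2 := by rw [hps]; nlinarith
      have hge0 : (0 : ℝ) ≤ r * 2 ^ t := by positivity
      have h0 : (0 : ℤ) ≤ ⌊r * 2 ^ t⌋ := Int.floor_nonneg.2 hge0
      have h2 : ⌊r * 2 ^ t⌋ < 2 := by rw [Int.floor_lt]; exact_mod_cast hlt2
      unfold binDigit at ht1
      omega
    have hrge : (2 : ℝ)⁻¹ ^ t ≤ r := by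
      have h1r : (1 : ℝ) ≤ r * 2 ^ t := by
        have := (Int.floor_eq_iff.1 hflt).1
        push_cast at this
        linarith
      have hp : (0 : ℝ) < 2 ^ t := by positivity
      rw [inv_pow, ← one_div, div_le_iff₀ hp]
      linarith
    have hrlt' : r < (2 : ℝ)⁻¹ ^ (t - 1) := by
      have hp : (0 : ℝ) < 2 ^ (t - 1) := by positivity
      rw [inv_pow, ← one_div, lt_div_iff₀ hp]
      linarith
    have hTodo : TOdo r = r - (2 : ℝ)⁻¹ ^ t + (1 - (2 : ℝ)⁻¹ ^ (t - 1)) := by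
      unfold TOdo
      rw [← htdef, sum_inv_two]
    have hrevfull : bitRev i (2 ^ i - 1) = 2 ^ i - 1 := by
      apply Nat.eq_of_testBit_eq
      intro m
      by_cases hm : m < i
      · rw [bitRev_testBit _ _ _ hm, Nat.testBit_two_pow_sub_one, Nat.testBit_two_pow_sub_one]
        simp only [decide_eq_decide]
        omega
      · rw [bitRev_testBit_ge _ _ _ (by omega), Nat.testBit_two_pow_sub_one]
        simp [show ¬ m < i from hm]
    rw [dyadicI_eq_Ico i (2 ^ i - 1), hrevfull, Set.mem_Ico]
    have hcast : ((2 ^ i - 1 : ℕ) : ℝ) = 2 ^ i - 1 := by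
      rw [Nat.cast_sub h2i]; push_cast; ring
    have hmono : (2 : ℝ)⁻¹ ^ (t - 1) ≤ (2 : ℝ)⁻¹ ^ i :=
      pow_le_pow_of_le_one (by norm_num) (by norm_num) (by omega)
    have he : ((2 : ℝ) ^ i - 1) / 2 ^ i = 1 - (2 : ℝ)⁻¹ ^ i := by
      rw [inv_pow]; field_simp
    have he2 : ((2 : ℝ) ^ i - 1 + 1) / 2 ^ i = 1 := by field_simp; ring
    have hp2t : (0 : ℝ) < (2 : ℝ)⁻¹ ^ t := by positivity
    constructor
    · rw [hcast, he, hTodo]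
      linarith
    · rw [hcast, he2, hTodo]
      linarith
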